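/- Correctness of the realizer for the functional interpretation of Zorn's lemma (abstract verification): Assume given maps ⌊·⌋ : σ × δ → ν, ⊕ : σ × ρ → σ, a decidable relation ≺ : σ × ρ → Bool, a decidable predicate Q on ν, functions Ω : (σ → (ρ → δ) → δ) → σ → δ and e, satisfying the recursive equation ΩFx = F x̄ (Ω_{F,x̄}) where x̄ := eFx(Ω_{F,x}) and Ω_{F,x}(a) := if a ≻ x then ΩF(x ⊕ a) else 0_δ, together with the 'relevant part' axiom ⌊x⌋_{ΩFx} = ⌊x̄⌋_{ΩFx} for all x, F. Further assume a function Γ : (σ → (ρ→δ)→δ) → (σ → (ρ→δ)→ρ) → σ → List σ satisfying ΓFGx = y :: (if C(G,y,Ω_{F,y}) then [] else ΓFG(y ⊕ G y Ω_{F,y})) where y := x̄ and C(G,y,h) := (G y h ≻ y → ¬Q(⌊y ⊕ G y h⌋_{h(G y h)})), and that ΓFGx is always a nonempty finite list. Then, defining r := ΩFx, s := last(ΓFGx), t := Ω_{F,s}, for all x, F, G: Q(⌊x⌋_r) → Q(⌊s⌋_{F s t}) ∧ C(G,s,t). -/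

import Mathlib

section

variable {σ ρ δ ν : Type*}

/-- `Ω_{F,x} = λa. if a ≻ x then ΩF(x ⊕ a) else 0_δ`. -/
def Osub (d0 : δ) (oplus : σ → ρ → σ) (prec : σ → ρ → Bool)
    (Ω : (σ → (ρ → δ) → δ) → σ → δ) (F : σ → (ρ → δ) → δ) (x : σ) : ρ → δ :=
  fun a => if prec x a then Ω F (oplus x a) else d0

/-- `x̄ := e F x Ω_{F,x}`, the truncation of `x`. -/
def trunc (d0 : δ) (oplus : σ → ρ → σ) (prec : σ → ρ → Bool)
    (Ω : (σ → (ρ → δ) → δ) → σ → δ)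
    (e : (σ → (ρ → δ) → δ) → σ → (ρ → δ) → σ) (F : σ → (ρ → δ) → δ) (x : σ) : σ :=
  e F x (Osub d0 oplus prec Ω F x)

/-- `C(G,y,h) :≡ (G y h ≻ y → ¬Q(⌊y ⊕ G y h⌋_{h(G y h)}))`. -/
def Cpred (app : σ → δ → ν) (oplus : σ → ρ → σ) (prec : σ → ρ → Bool) (Q : ν → Prop)
    (G : σ → (ρ → δ) → ρ) (y : σ) (h : ρ → δ) : Prop :=
  prec y (G y h) = true → ¬ Q (app (oplus y (G y h)) (h (G y h)))

open scoped Classical in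
/-- Correctness of the realizer of the functional interpretation of Zorn's lemma
(Theorem 5.2 of the paper): given `Ω` and `Γ` satisfying their recursive defining
equations and the relevant-part axiom, the terms `r := ΩFx`, `s := last(ΓFGx)`,
`t := Ω_{F,s}` satisfy `Q(⌊x⌋_r) → Q(⌊s⌋_{Fst}) ∧ C(G,s,t)`. -/
theorem zorn_realizer_correct [Inhabited σ] (d0 : δ)
    (app : σ → δ → ν) (oplus : σ → ρ → σ) (prec : σ → ρ → Bool) (Q : ν → Prop)
    (Ω : (σ → (ρ → δ) → δ) → σ → δ)
    (e : (σ → (ρ → δ) → δ) → σ → (ρ → δ) → σ)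
    (Γ : (σ → (ρ → δ) → δ) → (σ → (ρ → δ) → ρ) → σ → List σ)
    -- the recursive defining equation of Ω
    (hΩ : ∀ (F : σ → (ρ → δ) → δ) (x : σ),
      Ω F x = F (trunc d0 oplus prec Ω e F x)
        (Osub d0 oplus prec Ω F (trunc d0 oplus prec Ω e F x)))
    -- the relevant-part axiom
    (hRP : ∀ (F : σ → (ρ → δ) → δ) (x : σ),
      app x (Ω F x) = app (trunc d0 oplus prec Ω e F x) (Ω F x))
    -- the recursive defining equation of Γ
    (hΓ : ∀ (F : σ → (ρ → δ) → δ) (G : σ → (ρ → δ) → ρ) (x : σ),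
      Γ F G x = (trunc d0 oplus prec Ω e F x) ::
        (if Cpred app oplus prec Q G (trunc d0 oplus prec Ω e F x)
              (Osub d0 oplus prec Ω F (trunc d0 oplus prec Ω e F x)) then ([] : List σ)
         else Γ F G (oplus (trunc d0 oplus prec Ω e F x)
            (G (trunc d0 oplus prec Ω e F x)
               (Osub d0 oplus prec Ω F (trunc d0 oplus prec Ω e F x)))))) :
    ∀ (x : σ) (F : σ → (ρ → δ) → δ) (G : σ → (ρ → δ) → ρ),
      Q (app x (Ω F x)) →
        Q (app ((Γ F G x).getLast!)
            (F ((Γ F G x).getLast!) (Osub d0 oplus prec Ω F ((Γ F G x).getLast!)))) ∧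
          Cpred app oplus prec Q G ((Γ F G x).getLast!)
            (Osub d0 oplus prec Ω F ((Γ F G x).getLast!)) := by
  intro x F G
  suffices H : ∀ (n : ℕ) (x : σ), (Γ F G x).length = n → Q (app x (Ω F x)) →
      Q (app ((Γ F G x).getLast!)
          (F ((Γ F G x).getLast!) (Osub d0 oplus prec Ω F ((Γ F G x).getLast!)))) ∧
        Cpred app oplus prec Q G ((Γ F G x).getLast!)
          (Osub d0 oplus prec Ω F ((Γ F G x).getLast!)) by
    exact H _ x rfl
  intro n
  induction n using Nat.strong_induction_on with
  | _ n IH =>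
  intro x hlen hQ
  set y := trunc d0 oplus prec Ω e F x with hy
  by_cases hC : Cpred app oplus prec Q G y (Osub d0 oplus prec Ω F y)
  · have hlist : Γ F G x = [y] := by rw [hΓ]; simp [hC, ← hy]
    rw [hlist]
    simp only [List.getLast!]
    have h1 : Q (app y (Ω F x)) := by rw [← hRP F x]; exact hQ
    rw [hΩ F x, ← hy] at h1
    exact ⟨by simpa using h1, by simpa using hC⟩
  · set g := G y (Osub d0 oplus prec Ω F y) with hg
    set x' := oplus y g with hx'
    have hlist : Γ F G x = y :: Γ F G x' := by rw [hΓ]; simp [hC, ← hy, ← hg, ← hx']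
    have hne : Γ F G x' ≠ [] := by rw [hΓ]; simp
    have hgl : (Γ F G x).getLast! = (Γ F G x').getLast! := by
      obtain ⟨a, l, hl⟩ := List.exists_cons_of_ne_nil hne
      rw [hlist, hl]
      simp [List.getLast!, List.getLast]
    have hlt : (Γ F G x').length < n := by
      have : (Γ F G x).length = (Γ F G x').length + 1 := by rw [hlist]; simp
      omega
    unfold Cpred at hC
    push_neg at hC
    obtain ⟨hp, hq⟩ := hC
    have hosub : Osub d0 oplus prec Ω F y g = Ω F x' := by
      unfold Osub; rw [hp]; simp; rfl
    rw [hosub] at hq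
    rw [hgl]
    exact IH _ hlt x' rfl hq


end
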